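/- Let I ⊆ ℝ be an open interval and f, g : I → ℝ smooth with f > 0 and g' ≠ 0 on I, and suppose f, g satisfy Eq. (I) on I. Define H₁₁ = 6(f')²/f − 6g(f')³/(f²g') − 8f'' + 10g·f'·f''/(f·g') − 6g(f')²g''/(f·(g')²) + 8g·f''·g''/(g')² + 30f(g'')²/(g')² − 60f·g·(g'')³/(g')⁴ − 4g·f'''/g' − 20f·g'''/g' + 60f·g·g''·g'''/(g')³ − 10f·g·g''''/(g')², and H₁₂ = −6(f')³/(f²g') + 10f'·f''/(f·g') − 6(f')²g''/(f·(g')²) + 8f''·g''/(g')² − 60f(g'')³/(g')⁴ − 4f'''/g' + 60f·g''·g'''/(g')³ − 10f·g''''/(g')². Then H₁₁ = 0 and H₁₂ = 0 identically on I. (That is, the first two determining equations of the A₃,₃⊕A₁ symmetry case are consequences of Eq. (I).) -/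

import Mathlib

/-- Eq. (I): `g''' = (3/10)·g'·(f')²/f² − (2/5)·g'·f''/f + (3/2)·(g'')²/g'`. -/
def SatEqI (f g : ℝ → ℝ) (x : ℝ) : Prop :=
  (deriv^[3] g x) =
    (3/10) * deriv g x * (deriv f x)^2 / (f x)^2
      - (2/5) * deriv g x * (deriv^[2] f x) / f x
      + (3/2) * (deriv^[2] g x)^2 / deriv g x

/-- The differential function `H₁₁`. -/
noncomputable def H11 (f g : ℝ → ℝ) (x : ℝ) : ℝ :=
  6 * (deriv f x)^2 / f x
    - 6 * g x * (deriv f x)^3 / ((f x)^2 * deriv g x)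
    - 8 * (deriv^[2] f x)
    + 10 * g x * deriv f x * (deriv^[2] f x) / (f x * deriv g x)
    - 6 * g x * (deriv f x)^2 * (deriv^[2] g x) / (f x * (deriv g x)^2)
    + 8 * g x * (deriv^[2] f x) * (deriv^[2] g x) / (deriv g x)^2
    + 30 * f x * (deriv^[2] g x)^2 / (deriv g x)^2
    - 60 * f x * g x * (deriv^[2] g x)^3 / (deriv g x)^4
    - 4 * g x * (deriv^[3] f x) / deriv g x
    - 20 * f x * (deriv^[3] g x) / deriv g x
    + 60 * f x * g x * (deriv^[2] g x) * (deriv^[3] g x) / (deriv g x)^3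
    - 10 * f x * g x * (deriv^[4] g x) / (deriv g x)^2

/-- The differential function `H₁₂`. -/
noncomputable def H12 (f g : ℝ → ℝ) (x : ℝ) : ℝ :=
  -6 * (deriv f x)^3 / ((f x)^2 * deriv g x)
    + 10 * deriv f x * (deriv^[2] f x) / (f x * deriv g x)
    - 6 * (deriv f x)^2 * (deriv^[2] g x) / (f x * (deriv g x)^2)
    + 8 * (deriv^[2] f x) * (deriv^[2] g x) / (deriv g x)^2
    - 60 * f x * (deriv^[2] g x)^3 / (deriv g x)^4
    - 4 * (deriv^[3] f x) / deriv g x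
    + 60 * f x * (deriv^[2] g x) * (deriv^[3] g x) / (deriv g x)^3
    - 10 * f x * (deriv^[4] g x) / (deriv g x)^2

set_option maxHeartbeats 2000000 in
/-- if `f, g` satisfy Eq. (I) on `I`, then the determining functions
`H₁₁` and `H₁₂` of the `A₃,₃⊕A₁` symmetry case vanish identically on `I`. -/
theorem statement19
    (I : Set ℝ) (hIopen : IsOpen I) (hIinterval : I.OrdConnected)
    (f g : ℝ → ℝ)
    (hf : ContDiffOn ℝ (⊤ : ℕ∞) f I) (hg : ContDiffOn ℝ (⊤ : ℕ∞) g I)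
    (hfpos : ∀ x ∈ I, 0 < f x) (hg' : ∀ x ∈ I, deriv g x ≠ 0)
    (hEqI : ∀ x ∈ I, SatEqI f g x) :
    ∀ x ∈ I, H11 f g x = 0 ∧ H12 f g x = 0 := by
  -- iterated derivatives stay smooth on the open set
  have hfn : ∀ n : ℕ, ContDiffOn ℝ (⊤ : ℕ∞) (deriv^[n] f) I := by
    intro n
    induction n with
    | zero => exact hf
    | succ k ih =>
      rw [Function.iterate_succ_apply']
      exact ih.deriv_of_isOpen hIopen (by simp)
  have hgn : ∀ n : ℕ, ContDiffOn ℝ (⊤ : ℕ∞) (deriv^[n] g) I := by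
    intro n
    induction n with
    | zero => exact hg
    | succ k ih =>
      rw [Function.iterate_succ_apply']
      exact ih.deriv_of_isOpen hIopen (by simp)
  -- the polynomial form of Eq. (I) holds on I
  have hP0 : Set.EqOn (fun y =>
      10 * deriv^[3] g y * f y ^ 2 * deriv g y - 3 * deriv g y ^ 2 * deriv f y ^ 2
        + 4 * deriv g y ^ 2 * f y * deriv^[2] f y - 15 * f y ^ 2 * deriv^[2] g y ^ 2)
      (fun _ => (0 : ℝ)) I := by
    intro y hy
    have h := hEqI y hy
    unfold SatEqI at h
    have hfy : f y ≠ 0 := (hfpos y hy).ne'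
    have hgy : deriv g y ≠ 0 := hg' y hy
    field_simp at h
    simp only [Function.iterate_succ_apply', Function.iterate_zero_apply] at h ⊢
    have h2 : (10 * (deriv (deriv (deriv g)) y) * (f y)^2 * deriv g y
        - 3 * (deriv g y)^2 * (deriv f y)^2
        + 4 * (deriv g y)^2 * (f y) * (deriv (deriv f) y)
        - 15 * (f y)^2 * (deriv (deriv g) y)^2) * (10 * f y * deriv g y) = 0 := by
      linear_combination (f y * deriv g y) * h
    have h3 : (10 : ℝ) * f y * deriv g y ≠ 0 := by simp [hfy, hgy]
    exact (mul_eq_zero.mp h2).resolve_right h3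
  intro x hx
  have hfx : f x ≠ 0 := (hfpos x hx).ne'
  have hg1x : deriv g x ≠ 0 := hg' x hx
  -- derivatives at x
  have hdf : ∀ n : ℕ, HasDerivAt (deriv^[n] f) (deriv^[n+1] f x) x := by
    intro n
    rw [Function.iterate_succ_apply']
    exact (((hfn n).differentiableOn (by simp)).differentiableAt
      (hIopen.mem_nhds hx)).hasDerivAt
  have hdg : ∀ n : ℕ, HasDerivAt (deriv^[n] g) (deriv^[n+1] g x) x := by
    intro n
    rw [Function.iterate_succ_apply']
    exact (((hgn n).differentiableOn (by simp)).differentiableAt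
      (hIopen.mem_nhds hx)).hasDerivAt
  have Hf : HasDerivAt f (deriv f x) x := by simpa using hdf 0
  have Hf1 : HasDerivAt (deriv f) (deriv^[2] f x) x := by simpa using hdf 1
  have Hf2 : HasDerivAt (deriv^[2] f) (deriv^[3] f x) x := hdf 2
  have Hg1 : HasDerivAt (deriv g) (deriv^[2] g x) x := by simpa using hdg 1
  have Hg2 : HasDerivAt (deriv^[2] g) (deriv^[3] g x) x := hdg 2
  have Hg3 : HasDerivAt (deriv^[3] g) (deriv^[4] g x) x := hdg 3
  -- derivative of the polynomial identity
  have HP := ((((Hg3.const_mul (10:ℝ)).mul (Hf.pow 2)).mul Hg1).sub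
      (((Hg1.pow 2).const_mul (3:ℝ)).mul (Hf1.pow 2))).add
      ((((Hg1.pow 2).const_mul (4:ℝ)).mul Hf).mul Hf2) |>.sub
      (((Hf.pow 2).const_mul (15:ℝ)).mul (Hg2.pow 2))
  have hev : (fun y =>
      10 * deriv^[3] g y * f y ^ 2 * deriv g y - 3 * deriv g y ^ 2 * deriv f y ^ 2
        + 4 * deriv g y ^ 2 * f y * deriv^[2] f y - 15 * f y ^ 2 * deriv^[2] g y ^ 2)
      =ᶠ[nhds x] (fun _ => (0 : ℝ)) :=
    Filter.eventuallyEq_of_mem (hIopen.mem_nhds hx) hP0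
  have H0 : HasDerivAt (fun y =>
      10 * deriv^[3] g y * f y ^ 2 * deriv g y - 3 * deriv g y ^ 2 * deriv f y ^ 2
        + 4 * deriv g y ^ 2 * f y * deriv^[2] f y - 15 * f y ^ 2 * deriv^[2] g y ^ 2)
      0 x := (hasDerivAt_const x (0:ℝ)).congr_of_eventuallyEq hev
  have hDeq := HP.unique H0
  -- solve for the fourth derivative
  have hg4 : deriv^[4] g x =
      (30*(f x)^2*(deriv^[2] g x)*(deriv^[3] g x) + 30*(f x)*(deriv f x)*(deriv^[2] g x)^2
        - 20*(deriv^[3] g x)*(f x)*(deriv f x)*(deriv g x)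
        - 10*(deriv^[3] g x)*(f x)^2*(deriv^[2] g x)
        + 6*(deriv g x)*(deriv^[2] g x)*(deriv f x)^2
        + 2*(deriv g x)^2*(deriv f x)*(deriv^[2] f x)
        - 8*(deriv g x)*(deriv^[2] g x)*(f x)*(deriv^[2] f x)
        - 4*(deriv g x)^2*(f x)*(deriv^[3] f x)) / (10*(f x)^2*(deriv g x)) := by
    rw [eq_div_iff (by positivity)]
    simp only [Pi.mul_apply, Pi.pow_apply, Nat.cast_ofNat, Nat.reduceSub, pow_one] at hDeq
    linear_combination hDeq
  have hg3 := hEqI x hx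
  unfold SatEqI at hg3
  constructor
  · unfold H11
    rw [hg4, hg3]
    field_simp
    ring
  · unfold H12
    rw [hg4, hg3]
    field_simp
    ring
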